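/- Let L be the language generated by the single bi-infinite sequence …1112111… (all letters 1 except a single 2). Then L satisfies the unflipped order condition with 1 <_D 2 and 2 <_A 1, but L is not the natural coding of any affine interval exchange transformation on two intervals. -/

import Mathlib

open List Set

variable {A : Type*}

/-- A (factorial, extendable) language over an alphabet `A`. -/
def IsLanguage (L : Set (List A)) : Prop :=
  (∀ w ∈ L, ∀ v : List A, v <:+: w → v ∈ L) ∧
  (∀ w ∈ L, ∃ a : A, a :: w ∈ L) ∧
  (∀ w ∈ L, ∃ a : A, w ++ [a] ∈ L)

/-- Arrival set `A(w)`. -/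
def arrSet (L : Set (List A)) (w : List A) : Set A := {a | a :: w ∈ L}

/-- Departure set `D(w)`. -/
def depSet (L : Set (List A)) (w : List A) : Set A := {a | w ++ [a] ∈ L}

def Bispecial (L : Set (List A)) (w : List A) : Prop :=
  1 < (arrSet L w).ncard ∧ 1 < (depSet L w).ncard

/-- `m(w) = #{awb ∈ L}`. -/
noncomputable def extCount (L : Set (List A)) (w : List A) : ℕ :=
  {p : A × A | p.1 :: (w ++ [p.2]) ∈ L}.ncard

def StrongBispecial (L : Set (List A)) (w : List A) : Prop :=
  Bispecial L w ∧ (arrSet L w).ncard + (depSet L w).ncard - 1 < extCount L w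

def WeakBispecial (L : Set (List A)) (w : List A) : Prop :=
  Bispecial L w ∧ extCount L w < (arrSet L w).ncard + (depSet L w).ncard - 1

def LocallyStrongBispecial (L : Set (List A)) (w : List A) : Prop :=
  Bispecial L w ∧ ∃ A' D' : Set A, A'.Nonempty ∧ D'.Nonempty ∧
    A' ⊆ arrSet L w ∧ D' ⊆ depSet L w ∧
    A'.ncard + D'.ncard - 1 <
      {p : A × A | p.1 ∈ A' ∧ p.2 ∈ D' ∧ p.1 :: (w ++ [p.2]) ∈ L}.ncard

/-- The order condition at a single bispecial word, for orders `rA`, `rD`. -/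
def OrderConditionAt (L : Set (List A)) (w : List A) (rA rD : A → A → Prop) : Prop :=
  ∀ a b c d : A, a ≠ b → c ≠ d →
    a :: (w ++ [c]) ∈ L → b :: (w ++ [d]) ∈ L → (rA a b ↔ rD c d)

/-- The local order condition. -/
def LocalOrderCondition (L : Set (List A)) : Prop :=
  ∀ w : List A, Bispecial L w → ∃ rA rD : A → A → Prop,
    IsStrictTotalOrder A rA ∧ IsStrictTotalOrder A rD ∧ OrderConditionAt L w rA rD

/-- `a` and `a'` are consecutive in the strict order `r`. -/
def ConsecutiveIn (r : A → A → Prop) (a a' : A) : Prop :=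
  r a a' ∧ ∀ c : A, ¬ (r a c ∧ r c a')

/-- A connection for the bispecial word `w`, with respect to orders `rA`, `rD`. -/
def ConnectionWith (L : Set (List A)) (w : List A) (rA rD : A → A → Prop) : Prop :=
  ∃ a a' b b' : A, ConsecutiveIn rA a a' ∧ ConsecutiveIn rD b b' ∧
    a :: (w ++ [b]) ∈ L ∧ a' :: (w ++ [b']) ∈ L ∧
    a :: (w ++ [b']) ∉ L ∧ a' :: (w ++ [b]) ∉ L

/-- `w` has a connection (for some orders realizing the order condition at `w`). -/
def HasConnection (L : Set (List A)) (w : List A) : Prop :=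
  ∃ rA rD : A → A → Prop, IsStrictTotalOrder A rA ∧ IsStrictTotalOrder A rD ∧
    OrderConditionAt L w rA rD ∧ ConnectionWith L w rA rD

/-- Complexity function `p(n)`. -/
noncomputable def complexityFn (L : Set (List A)) (n : ℕ) : ℕ :=
  {w ∈ L | w.length = n}.ncard

def UniformlyRecurrent (L : Set (List A)) : Prop :=
  ∀ v ∈ L, ∃ n : ℕ, ∀ u ∈ L, u.length = n → v <:+: u

def LangRecurrent (L : Set (List A)) : Prop :=
  ∀ v ∈ L, ∃ u : List A, u ≠ [] ∧ v ++ u ∈ L ∧ v <:+ v ++ u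

def LangAperiodic (L : Set (List A)) : Prop :=
  ∀ w ∈ L, w ≠ [] → ∃ n : ℕ, (List.replicate n w).flatten ∉ L

def LeftSpecial (L : Set (List A)) (w : List A) : Prop := 1 < (arrSet L w).ncard

def RightSpecial (L : Set (List A)) (w : List A) : Prop := 1 < (depSet L w).ncard

/-- The two-sided subshift associated to `L`. -/
def XL (L : Set (List A)) : Set (ℤ → A) :=
  {x | ∀ (m : ℤ) (n : ℕ), (List.ofFn fun i : Fin n => x (m + (i : ℕ))) ∈ L}

def occursAtZ (x : ℤ → A) (m : ℤ) (w : List A) : Prop :=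
  (List.ofFn fun i : Fin w.length => x (m + (i : ℕ))) = w

def FactorsZ (x : ℤ → A) : Set (List A) := {w | ∃ m : ℤ, occursAtZ x m w}

def RightRec (x : ℤ → A) : Prop :=
  ∀ w ∈ FactorsZ x, ∀ N : ℤ, ∃ m : ℤ, N ≤ m ∧ occursAtZ x m w

def LeftRec (x : ℤ → A) : Prop :=
  ∀ w ∈ FactorsZ x, ∀ N : ℤ, ∃ m : ℤ, m ≤ N ∧ occursAtZ x m w

def RecurrentZ (x : ℤ → A) : Prop := RightRec x ∧ LeftRec x

/-- The `F`-flipped order condition, with orders `rA` (arrival) and `rD` (departure):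
the departure order is reversed when the number of `F`-letters of `w` is odd. -/
def FlippedOC [DecidableEq A] (L : Set (List A)) (F : Finset A)
    (rA rD : A → A → Prop) : Prop :=
  ∀ w : List A, Bispecial L w → ∀ a b c d : A, a ≠ b → c ≠ d →
    a :: (w ++ [c]) ∈ L → b :: (w ++ [d]) ∈ L →
    (rA a b ↔ if Even (w.countP fun e => decide (e ∈ F)) then rD c d else rD d c)

/-- A generalized `F`-flipped interval exchange transformation. -/
structure GIET (A : Type*) (F : Finset A) where
  l : A → ℝ
  r : A → ℝ
  T : ℝ → ℝ
  lt : ∀ e, l e < r e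
  sub : ∀ e, Set.Ioo (l e) (r e) ⊆ Set.Ioo (0 : ℝ) 1
  disj : ∀ e f, e ≠ f → Disjoint (Set.Ioo (l e) (r e)) (Set.Ioo (l f) (r f))
  cover : Set.Icc (0 : ℝ) 1 = ⋃ e, Set.Icc (l e) (r e)
  cont : ∀ e, ContinuousOn T (Set.Ioo (l e) (r e))
  inc : ∀ e ∉ F, StrictMonoOn T (Set.Ioo (l e) (r e))
  dec : ∀ e ∈ F, StrictAntiOn T (Set.Ioo (l e) (r e))
  l' : A → ℝ
  r' : A → ℝ
  lt' : ∀ e, l' e < r' e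
  img : ∀ e, T '' Set.Ioo (l e) (r e) = Set.Ioo (l' e) (r' e)
  disj' : ∀ e f, e ≠ f → Disjoint (Set.Ioo (l' e) (r' e)) (Set.Ioo (l' f) (r' f))
  cover' : Set.Icc (0 : ℝ) 1 = ⋃ e, Set.Icc (l' e) (r' e)

variable {F : Finset A}

/-- A bi-infinite orbit of `G`, with symbolic itinerary `u`. -/
def GIET.IsOrbit (G : GIET A F) (u : ℤ → A) (p : ℤ → ℝ) : Prop :=
  (∀ n : ℤ, G.T (p n) = p (n + 1)) ∧
  ∀ n : ℤ, p n ∈ Set.Ioo (G.l (u n)) (G.r (u n))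

/-- The natural coding `L(T)`: the language generated by all trajectories. -/
def GIET.lang (G : GIET A F) : Set (List A) :=
  {w | ∃ (u : ℤ → A) (p : ℤ → ℝ), G.IsOrbit u p ∧
    ∃ m : ℤ, (List.ofFn fun i : Fin w.length => u (m + (i : ℕ))) = w}

/-- The language generated by the bi-infinite word `…1112111…` (letter `1` is
`0 : Fin 2` and letter `2` is `1 : Fin 2`): all words `1ⁿ` and `1ⁿ21ᵐ`. -/
def skewSturmian : Set (List (Fin 2)) :=
  {w | ∃ n : ℕ, w = List.replicate n 0} ∪
  {w | ∃ n m : ℕ, w = List.replicate n 0 ++ 1 :: List.replicate m 0}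

lemma count_le_one {w : List (Fin 2)} (hw : w ∈ skewSturmian) : w.count 1 ≤ 1 := by
  rcases hw with ⟨n, rfl⟩ | ⟨n, m, rfl⟩ <;>
    simp [List.count_replicate, List.count_append, List.count_cons]

lemma no22 (w : List (Fin 2)) : (1 : Fin 2) :: (w ++ [1]) ∉ skewSturmian := by
  intro h
  have := count_le_one h
  simp [List.count_cons, List.count_append] at this

lemma fin2cases (a : Fin 2) : a = 0 ∨ a = 1 := by omega

lemma two_le_count {n : ℕ} (f : Fin n → Fin 2) (i j : Fin n) (hij : i ≠ j)
    (hi : f i = 1) (hj : f j = 1) : 2 ≤ (List.ofFn f).count 1 := by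
  have h1 : (List.ofFn f).count 1 = ((List.finRange n).filter (fun x => f x == 1)).length := by
    rw [List.ofFn_eq_map, List.count_eq_countP, List.countP_map,
      List.countP_eq_length_filter]
    rfl
  rw [h1]
  have hnd : ((List.finRange n).filter (fun x => f x == 1)).Nodup :=
    (List.nodup_finRange n).filter _
  have hmi : i ∈ (List.finRange n).filter (fun x => f x == 1) := by
    simp [List.mem_filter, hi]
  have hmj : j ∈ (List.finRange n).filter (fun x => f x == 1) := by
    simp [List.mem_filter, hj]
  have := List.toFinset_card_of_nodup hnd
  have hc : 1 < ((List.finRange n).filter (fun x => f x == 1)).toFinset.card :=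
    Finset.one_lt_card.mpr ⟨i, by simpa using hmi, j, by simpa using hmj, hij⟩
  omega

lemma part1 : FlippedOC skewSturmian (∅ : Finset (Fin 2))
    (fun a b => a = 1 ∧ b = 0) (fun a b => a = 0 ∧ b = 1) := by
  intro w _ a b c d hab hcd h1 h2
  have hE : Even (w.countP fun e => decide (e ∈ (∅ : Finset (Fin 2)))) := by
    simp
  rw [if_pos hE]
  have k1 : ¬(a = 1 ∧ c = 1) := by
    rintro ⟨rfl, rfl⟩; exact no22 w h1
  have k2 : ¬(b = 1 ∧ d = 1) := by
    rintro ⟨rfl, rfl⟩; exact no22 w h2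
  rcases fin2cases a with rfl | rfl <;> rcases fin2cases b with rfl | rfl <;>
    rcases fin2cases c with rfl | rfl <;> rcases fin2cases d with rfl | rfl <;>
    simp_all

lemma part2 : ¬ ∃ G : GIET (Fin 2) (∅ : Finset (Fin 2)),
    (∀ e, ∃ s c : ℝ, 0 < s ∧
      ∀ x ∈ Set.Ioo (G.l e) (G.r e), G.T x = s * x + c) ∧
    G.lang = skewSturmian := by
  rintro ⟨G, haff, hlang⟩
  obtain ⟨s, c, hs, hT⟩ := haff 0
  -- there is an orbit seeing the letter `2`
  have h1 : ([1] : List (Fin 2)) ∈ G.lang := by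
    rw [hlang]; right; exact ⟨0, 0, rfl⟩
  obtain ⟨u, p, horb, m, hm⟩ := h1
  have hum : u m = 1 := by
    simpa [List.ofFn_succ] using hm
  -- every window of the orbit is in the language
  have hfac : ∀ (j : ℤ) (n : ℕ),
      (List.ofFn fun i : Fin n => u (j + (i : ℕ))) ∈ skewSturmian := by
    intro j n
    rw [← hlang]
    refine ⟨u, p, horb, j, ?_⟩
    apply List.ext_getElem <;> simp
  -- the letter `2` occurs only at position m
  have honly : ∀ k : ℤ, k ≠ m → u k = 0 := by
    intro k hk
    rcases fin2cases (u k) with h | h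
    · exact h
    exfalso
    set j := min k m with hj
    set d := (max k m - min k m).toNat with hdd
    have hd1 : 1 ≤ d := by omega
    have hd2 : (d : ℤ) = max k m - min k m := by omega
    have hmin : u (min k m) = 1 := by
      rcases le_total k m with hkm | hkm
      · rw [min_eq_left hkm]; exact h
      · rw [min_eq_right hkm]; exact hum
    have hmax : u (max k m) = 1 := by
      rcases le_total k m with hkm | hkm
      · rw [max_eq_right hkm]; exact hum
      · rw [max_eq_left hkm]; exact h
    have hle := count_le_one (hfac j (d + 1))
    have h2 := two_le_count (fun i : Fin (d + 1) => u (j + (i : ℕ)))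
      ⟨0, by omega⟩ ⟨d, by omega⟩ (by simp [Fin.ext_iff]; omega)
      (by simpa using hmin) (by
        show u (j + (d : ℕ)) = 1
        have : j + ((d : ℕ) : ℤ) = max k m := by omega
        rw [this]; exact hmax)
    omega
  -- basic orbit facts
  have hI0 : ∀ k : ℤ, k ≠ m → p k ∈ Set.Ioo (G.l 0) (G.r 0) := by
    intro k hk; have := horb.2 k; rwa [honly k hk] at this
  have hpm : p m ∈ Set.Ioo (G.l 1) (G.r 1) := by
    have := horb.2 m; rwa [hum] at this
  have hstep : ∀ k : ℤ, k ≠ m → p (k + 1) = s * p k + c := by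
    intro k hk; rw [← horb.1 k, hT _ (hI0 k hk)]
  -- the final contradiction when p (m+1) is a fixed point of T
  have final : s * p (m + 1) + c = p (m + 1) → False := by
    intro hfix
    have hq0 : p (m + 1) ∈ Set.Ioo (G.l 0) (G.r 0) := hI0 _ (by omega)
    have hin1 : p (m + 1) ∈ Set.Ioo (G.l' 1) (G.r' 1) := by
      rw [← G.img 1]; exact ⟨p m, hpm, horb.1 m⟩
    have hin0 : p (m + 1) ∈ Set.Ioo (G.l' 0) (G.r' 0) := by
      rw [← G.img 0]
      exact ⟨p (m + 1), hq0, by rw [hT _ hq0]; exact hfix⟩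
    exact Set.disjoint_left.mp (G.disj' 0 1 (by decide)) hin0 hin1
  rcases lt_trichotomy s 1 with hs1 | hs1 | hs1
  · -- contracting case: the backward orbit converges to the fixed point
    set x := c / (1 - s) with hx
    have h1s : (1 : ℝ) - s ≠ 0 := by intro h; linarith
    have hfixx : s * x + c = x := by
      have hx1 : x * (1 - s) = c := by rw [hx]; exact div_mul_cancel₀ c h1s
      linear_combination -hx1
    set M := max (x - G.l 0) (G.r 0 - x) with hM
    have hMb : ∀ y ∈ Set.Ioo (G.l 0) (G.r 0), |y - x| ≤ M := by
      intro y hy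
      rw [abs_le]
      constructor
      · have := le_max_left (x - G.l 0) (G.r 0 - x); have := hy.1; linarith
      · have := le_max_right (x - G.l 0) (G.r 0 - x); have := hy.2; linarith
    have hM0 : 0 < M := by
      have hlt := G.lt 0
      rcases lt_or_ge 0 (x - G.l 0) with h' | h'
      · exact lt_max_iff.mpr (Or.inl h')
      · exact lt_max_iff.mpr (Or.inr (by linarith))
    have hback : ∀ n : ℕ, p (m - 1) - x = s ^ n * (p (m - 1 - n) - x) := by
      intro n
      induction n with
      | zero => simp
      | succ n ih =>
        have hne : m - 1 - ((n : ℤ) + 1) ≠ m := by omega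
        have hstep' := hstep _ hne
        have hidx : m - 1 - ((n : ℤ) + 1) + 1 = m - 1 - n := by ring
        rw [hidx] at hstep'
        have hrw : p (m - 1 - ((n + 1 : ℕ) : ℤ)) = p (m - 1 - ((n : ℤ) + 1)) := by
          congr 1 <;> (push_cast; ring)
        rw [ih, hrw, pow_succ, hstep']
        linear_combination s ^ n * hfixx
    rcases eq_or_ne (p (m - 1)) x with hfp | hfp
    · -- p (m-1) = x, so p m = x lies in both intervals
      have hm1 : p (m - 1) ∈ Set.Ioo (G.l 0) (G.r 0) := hI0 _ (by omega)
      have hpmx : p m = x := by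
        have := hstep (m - 1) (by omega)
        have hidx : m - 1 + 1 = m := by ring
        rw [hidx] at this
        rw [this, hfp, hfixx]
      exact Set.disjoint_left.mp (G.disj 0 1 (by decide)) (hfp ▸ hm1) (hpmx ▸ hpm)
    · have habs : ∀ n : ℕ, |p (m - 1) - x| ≤ s ^ n * M := by
        intro n
        have h1 := hMb _ (hI0 (m - 1 - n) (by omega))
        calc |p (m - 1) - x| = s ^ n * |p (m - 1 - n) - x| := by
              rw [hback n, abs_mul, abs_of_pos (pow_pos hs n)]
          _ ≤ s ^ n * M := by
              exact mul_le_mul_of_nonneg_left h1 (le_of_lt (pow_pos hs n))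
      have hpos : 0 < |p (m - 1) - x| := abs_pos.mpr (sub_ne_zero.mpr hfp)
      obtain ⟨n, hn⟩ := exists_pow_lt_of_lt_one (div_pos hpos hM0) hs1
      have := (lt_div_iff₀ hM0).mp hn
      have := habs n
      linarith
  · -- slope 1: translation, must be the identity
    subst hs1
    have hlin : ∀ n : ℕ, p (m + 1 + n) = p (m + 1) + n * c := by
      intro n
      induction n with
      | zero => simp
      | succ n ih =>
        have hstep' := hstep (m + 1 + n) (by omega)
        have hrw : p (m + 1 + ((n + 1 : ℕ) : ℤ)) = p (m + 1 + (n : ℤ) + 1) := by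
          congr 1 <;> (push_cast; ring)
        rw [hrw, hstep', ih]
        push_cast
        ring
    have hc : c = 0 := by
      by_contra hc0
      rcases lt_or_gt_of_ne hc0 with hcneg | hcpos
      · obtain ⟨n, hn⟩ := exists_nat_gt ((p (m + 1) - G.l 0) / (-c))
        have h1 := (div_lt_iff₀ (by linarith)).mp hn
        have h2 := (hI0 (m + 1 + n) (by omega)).1
        rw [hlin n] at h2
        nlinarith
      · obtain ⟨n, hn⟩ := exists_nat_gt ((G.r 0 - p (m + 1)) / c)
        have h1 := (div_lt_iff₀ hcpos).mp hn
        have h2 := (hI0 (m + 1 + n) (by omega)).2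
        rw [hlin n] at h2
        nlinarith
    exact final (by rw [hc]; ring)
  · -- expanding case: the forward orbit must start at the fixed point
    set x := c / (1 - s) with hx
    have h1s : (1 : ℝ) - s ≠ 0 := by intro h; linarith
    have hfixx : s * x + c = x := by
      have hx1 : x * (1 - s) = c := by rw [hx]; exact div_mul_cancel₀ c h1s
      linear_combination -hx1
    set M := max (x - G.l 0) (G.r 0 - x) with hM
    have hMb : ∀ y ∈ Set.Ioo (G.l 0) (G.r 0), |y - x| ≤ M := by
      intro y hy
      rw [abs_le]
      constructor
      · have := le_max_left (x - G.l 0) (G.r 0 - x); have := hy.1; linarith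
      · have := le_max_right (x - G.l 0) (G.r 0 - x); have := hy.2; linarith
    have hiter : ∀ n : ℕ, p (m + 1 + n) - x = s ^ n * (p (m + 1) - x) := by
      intro n
      induction n with
      | zero => simp
      | succ n ih =>
        have hstep' := hstep (m + 1 + n) (by omega)
        have hrw : p (m + 1 + ((n + 1 : ℕ) : ℤ)) = p (m + 1 + (n : ℤ) + 1) := by
          congr 1 <;> (push_cast; ring)
        rw [hrw, hstep', pow_succ]
        linear_combination s * ih + hfixx
    rcases eq_or_ne (p (m + 1)) x with hfp | hfp
    · exact final (by rw [hfp]; exact hfixx)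
    · have habs : ∀ n : ℕ, s ^ n * |p (m + 1) - x| ≤ M := by
        intro n
        have h1 := hMb _ (hI0 (m + 1 + n) (by omega))
        calc s ^ n * |p (m + 1) - x| = |p (m + 1 + n) - x| := by
              rw [hiter n, abs_mul, abs_of_pos (pow_pos hs n)]
          _ ≤ M := h1
      have hpos : 0 < |p (m + 1) - x| := abs_pos.mpr (sub_ne_zero.mpr hfp)
      obtain ⟨n, hn⟩ := pow_unbounded_of_one_lt (M / |p (m + 1) - x|) hs1
      have := (div_lt_iff₀ hpos).mp hn
      have := habs n
      linarith

/-- the skew Sturmian language satisfies the unflipped order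
condition with `1 <_D 2` and `2 <_A 1`, but it is not the natural coding of any
(unflipped) affine interval exchange transformation on two intervals. -/
theorem stmt19 :
    FlippedOC skewSturmian (∅ : Finset (Fin 2))
      (fun a b => a = 1 ∧ b = 0)   -- 2 <_A 1
      (fun a b => a = 0 ∧ b = 1)   -- 1 <_D 2
    ∧
    ¬ ∃ G : GIET (Fin 2) (∅ : Finset (Fin 2)),
        (∀ e, ∃ s c : ℝ, 0 < s ∧
          ∀ x ∈ Set.Ioo (G.l e) (G.r e), G.T x = s * x + c) ∧
        G.lang = skewSturmian := by
  exact ⟨part1, part2⟩
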